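/- Let p(s) = sⁿ + p̂₁ s^{n−1} + ⋯ + p̂_n be a monic real polynomial. Let Φ ∈ ℝ^{n×n} be the companion-form matrix with Φ_{j,j+1} = 1 for 1 ≤ j ≤ n−1, last row (−p̂_n, −p̂_{n−1}, …, −p̂₁), and all other entries zero, and let Ψ = (1, 0, …, 0) ∈ ℝ^{1×n}. Then there exists a column vector G ∈ ℝⁿ such that every eigenvalue of Φ + G Ψ (over ℂ) has strictly negative real part, i.e., Φ + GΨ is Hurwitz. -/

import Mathlib

open Matrix

/-- The companion-form matrix `Φ` of the monic polynomial
`p(s) = sⁿ + p̂₁ s^{n−1} + ⋯ + p̂_n`, where `phat i = p̂_{i+1}`: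
superdiagonal entries equal `1`, the last row is `(−p̂_n, −p̂_{n−1}, …, −p̂₁)`,
and all other entries vanish. -/
noncomputable def companionMat {n : ℕ} (phat : Fin n → ℝ) : Matrix (Fin n) (Fin n) ℝ :=
  Matrix.of fun i j : Fin n =>
    if (i : ℕ) = n - 1 then -phat ⟨n - 1 - (j : ℕ), by have := j.isLt; omega⟩
    else if (i : ℕ) + 1 = (j : ℕ) then 1 else 0

/-- The row vector `Ψ = (1, 0, …, 0)`. -/
noncomputable def rowPsi (n : ℕ) : Matrix (Fin 1) (Fin n) ℝ :=
  Matrix.of fun _ j => if (j : ℕ) = 0 then 1 else 0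


namespace HurwitzAux
open Polynomial


variable (n : ℕ) (phat : Fin n → ℝ)

/-- extension of `phat` to `ℕ`. -/
noncomputable def a (k : ℕ) : ℝ := if h : k < n then phat ⟨k, h⟩ else 0

/-- last-row coefficients. -/
noncomputable def rr (j : ℕ) : ℝ := if j = 0 then 0 else -(a n phat (n - 1 - j))

/-- truncation / shift operator. -/
noncomputable def AA (P : ℝ[X]) : ℝ[X] :=
  ∑ j : Fin n, rr n phat (j : ℕ) • (P /ₘ X ^ (n - (j : ℕ)))

noncomputable def T : ℝ[X] := (X + 1) ^ n

noncomputable def Pp : ℝ[X] := ∑ m ∈ Finset.range (n + 1), (AA n phat)^[m] (T n)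

noncomputable def V (j : ℕ) : ℝ[X] := Pp n phat /ₘ X ^ (n - j)

noncomputable def c (i : ℕ) : ℝ := -((Pp n phat).coeff (n - 1 - i))

lemma coeff_divByMonic_X_pow (P : ℝ[X]) (i k : ℕ) :
    (P /ₘ X ^ i).coeff k = P.coeff (k + i) := by
  conv_rhs => rw [← modByMonic_add_div P (X ^ i : ℝ[X])]
  rw [coeff_add, coeff_X_pow_mul]
  have h : (P %ₘ X ^ i).coeff (k + i) = 0 := by
    apply coeff_eq_zero_of_degree_lt
    refine lt_of_lt_of_le (degree_modByMonic_lt P (monic_X_pow i)) ?_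
    rw [degree_X_pow]
    exact_mod_cast le_add_self
  rw [h, zero_add]

lemma coeff_AA (P : ℝ[X]) (k : ℕ) :
    (AA n phat P).coeff k = ∑ j : Fin n, rr n phat (j : ℕ) * P.coeff (k + (n - (j : ℕ))) := by
  rw [AA, finset_sum_coeff]
  refine Finset.sum_congr rfl fun j _ => ?_
  rw [coeff_smul, smul_eq_mul, coeff_divByMonic_X_pow]

lemma AA_add (P Q : ℝ[X]) : AA n phat (P + Q) = AA n phat P + AA n phat Q := by
  ext k
  simp [coeff_AA, coeff_add, mul_add, Finset.sum_add_distrib]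

lemma coeff_iter (m k : ℕ) (h : n < k + m) : ((AA n phat)^[m] (T n)).coeff k = 0 := by
  induction m generalizing k with
  | zero =>
    apply coeff_eq_zero_of_natDegree_lt
    calc (T n).natDegree ≤ n := by
          rw [T]
          refine le_trans (natDegree_pow_le) ?_
          have hXC : (X + 1 : ℝ[X]) = X + C 1 := by rw [C_1]
          rw [hXC, natDegree_X_add_C]; omega
      _ < k := by omega
  | succ m ih =>
    rw [Function.iterate_succ_apply', coeff_AA]
    refine Finset.sum_eq_zero fun j _ => ?_
    by_cases hj : (j : ℕ) = 0
    · simp [rr, hj]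
    · rw [ih]
      · ring
      · have := j.isLt; omega

lemma coeff_Pp_gt (k : ℕ) (h : n < k) : (Pp n phat).coeff k = 0 := by
  rw [Pp, finset_sum_coeff]
  exact Finset.sum_eq_zero fun m _ => coeff_iter n phat m k (by omega)

lemma coeff_Pp_n : (Pp n phat).coeff n = 1 := by
  rw [Pp, finset_sum_coeff, Finset.sum_range_succ']
  have h1 : ∀ m ∈ Finset.range n, ((AA n phat)^[m + 1] (T n)).coeff n = 0 := by
    intro m _
    exact coeff_iter n phat (m + 1) n (by omega)
  rw [Finset.sum_congr rfl h1, Finset.sum_const, smul_zero, zero_add,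
    Function.iterate_zero_apply]
  have hXC : (X + 1 : ℝ[X]) = X + C 1 := by rw [C_1]
  have hm : (T n).Monic := by
    rw [T, hXC]; exact (monic_X_add_C 1).pow n
  have hd : (T n).natDegree = n := by
    rw [T, hXC, natDegree_pow, natDegree_X_add_C, mul_one]
  have := hm.coeff_natDegree
  rwa [hd] at this

lemma V_zero (hn : 0 < n) : V n phat 0 = 1 := by
  ext k
  rw [V, Nat.sub_zero, coeff_divByMonic_X_pow]
  rcases k with _ | k
  · simp [coeff_Pp_n n phat]
  · rw [coeff_Pp_gt n phat _ (by omega), coeff_one]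
    simp

lemma V_succ (j : ℕ) (hj : j < n) :
    V n phat (j + 1) = X * V n phat j + C ((Pp n phat).coeff (n - 1 - j)) := by
  ext k
  rw [V, coeff_divByMonic_X_pow, coeff_add, coeff_C]
  rcases k with _ | k
  · rw [mul_coeff_zero, coeff_X_zero, zero_mul, zero_add, if_pos rfl, zero_add]
    have h : n - (j + 1) = n - 1 - j := by omega
    rw [h]
  · rw [coeff_X_mul, V, coeff_divByMonic_X_pow, if_neg (Nat.succ_ne_zero k), add_zero]
    have h : k + 1 + (n - (j + 1)) = k + (n - j) := by omega
    rw [h]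

lemma V_top : V n phat n = Pp n phat := by
  ext k
  rw [V, coeff_divByMonic_X_pow, Nat.sub_self, add_zero]

lemma Pp_eq : Pp n phat = T n + AA n phat (Pp n phat) := by
  have hhom : AA n phat (Pp n phat)
      = ∑ m ∈ Finset.range (n + 1), (AA n phat)^[m + 1] (T n) := by
    have h := map_sum (AddMonoidHom.mk' (AA n phat) (AA_add n phat))
      (fun m => (AA n phat)^[m] (T n)) (Finset.range (n + 1))
    simp only [AddMonoidHom.mk'_apply, ← Function.iterate_succ_apply'] at h
    rw [Pp]
    exact h
  rw [hhom]
  have h2 : (T n) + ∑ m ∈ Finset.range (n + 1), (AA n phat)^[m + 1] (T n)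
      = ∑ m ∈ Finset.range (n + 2), (AA n phat)^[m] (T n) := by
    rw [Finset.sum_range_succ' (fun m => (AA n phat)^[m] (T n)) (n + 1)]
    rw [Function.iterate_zero_apply, add_comm]
  rw [h2, Finset.sum_range_succ, Pp]
  have h0 : (AA n phat)^[n + 1] (T n) = 0 := by
    ext k
    rw [coeff_iter n phat (n + 1) k (by omega), coeff_zero]
  rw [h0, add_zero]

lemma key_identity :
    Pp n phat = T n + ∑ j : Fin n, rr n phat (j : ℕ) • V n phat (j : ℕ) := by
  exact Pp_eq n phat


noncomputable def Gmat (hn : 0 < n) : Matrix (Fin n) (Fin 1) ℝ :=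
  Matrix.of fun i _ => c n phat (i : ℕ) - companionMat phat i ⟨0, hn⟩

lemma M_entry (hn : 0 < n) (i j : Fin n) :
    (companionMat phat + Gmat n phat hn * rowPsi n) i j
      = if (j : ℕ) = 0 then c n phat (i : ℕ) else companionMat phat i j := by
  have hmul : (Gmat n phat hn * rowPsi n) i j
      = Gmat n phat hn i 0 * rowPsi n 0 j := by
    rw [Matrix.mul_apply, Fin.sum_univ_one]
  rw [Matrix.add_apply, hmul]
  by_cases h : (j : ℕ) = 0
  · have hj : j = ⟨0, hn⟩ := Fin.ext h
    subst hj
    simp [rowPsi, Gmat]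
  · simp [rowPsi, h, Gmat]

end HurwitzAux

/-- There is an output-injection gain `G` making `Φ + G Ψ` Hurwitz. -/
theorem exists_hurwitz_output_injection (n : ℕ) (phat : Fin n → ℝ) :
    ∃ G : Matrix (Fin n) (Fin 1) ℝ,
      ∀ μ ∈ spectrum ℂ ((companionMat phat + G * rowPsi n).map (algebraMap ℝ ℂ)),
        μ.re < 0 := by
  open HurwitzAux Polynomial in
  rcases Nat.eq_zero_or_pos n with hn | hn
  · subst hn
    refine ⟨0, fun μ hμ => ?_⟩
    rw [spectrum.mem_iff] at hμ
    haveI : Subsingleton (Matrix (Fin 0) (Fin 0) ℂ) :=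
      ⟨fun a b => by ext i; exact i.elim0⟩
    exact absurd (isUnit_of_subsingleton _) hμ
  · refine ⟨Gmat n phat hn, fun μ hμ => ?_⟩
    set M : Matrix (Fin n) (Fin n) ℝ := companionMat phat + Gmat n phat hn * rowPsi n with hMdef
    rw [spectrum.mem_iff] at hμ
    have hdet : (algebraMap ℂ (Matrix (Fin n) (Fin n) ℂ) μ - M.map (algebraMap ℝ ℂ)).det = 0 := by
      by_contra h
      exact hμ ((Matrix.isUnit_iff_isUnit_det _).2 (isUnit_iff_ne_zero.2 h))
    obtain ⟨v, hv0, hveq⟩ := Matrix.exists_mulVec_eq_zero_iff.2 hdet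
    rw [Algebra.algebraMap_eq_smul_one, Matrix.sub_mulVec, Matrix.smul_mulVec,
      Matrix.one_mulVec, sub_eq_zero] at hveq
    have hrow : ∀ i : Fin n, ∑ j, (algebraMap ℝ ℂ) (M i j) * v j = μ * v i := by
      intro i
      have h := congrFun hveq.symm i
      simpa [Matrix.mulVec, dotProduct, Matrix.map_apply, Pi.smul_apply,
        smul_eq_mul] using h
    -- the recursion for rows 0..n-2
    have hstep : ∀ k (hk : k + 1 < n),
        v ⟨k + 1, hk⟩ = μ * v ⟨k, by omega⟩
          - (algebraMap ℝ ℂ) (c n phat k) * v ⟨0, hn⟩ := by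
      intro k hk
      have h := hrow ⟨k, by omega⟩
      have hsum : ∀ j : Fin n, (algebraMap ℝ ℂ) (M ⟨k, by omega⟩ j) * v j
          = (if j = (⟨0, hn⟩ : Fin n) then (algebraMap ℝ ℂ) (c n phat k) * v j else 0)
            + (if j = (⟨k + 1, hk⟩ : Fin n) then v j else 0) := by
        intro j
        rw [hMdef, M_entry]
        by_cases hj0 : (j : ℕ) = 0
        · have hj : j = ⟨0, hn⟩ := Fin.ext hj0
          subst hj
          rw [if_pos rfl, if_pos rfl, if_neg (by simp [Fin.ext_iff]), add_zero]
        · rw [if_neg hj0, if_neg (by simp [Fin.ext_iff]; omega), zero_add]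
          have hcomp : companionMat phat ⟨k, by omega⟩ j
              = if k + 1 = (j : ℕ) then 1 else 0 := by
            rw [companionMat]
            simp only [Matrix.of_apply]
            rw [if_neg (by omega)]
          rw [hcomp]
          by_cases hj1 : k + 1 = (j : ℕ)
          · have hj : j = ⟨k + 1, hk⟩ := Fin.ext hj1.symm
            subst hj
            rw [if_pos rfl, if_pos rfl, _root_.map_one, one_mul]
          · rw [if_neg hj1, if_neg (by simp [Fin.ext_iff]; omega), map_zero, zero_mul]
      rw [Finset.sum_congr rfl (fun j _ => hsum j), Finset.sum_add_distrib,
        Finset.sum_ite_eq' Finset.univ, Finset.sum_ite_eq' Finset.univ,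
        if_pos (Finset.mem_univ _), if_pos (Finset.mem_univ _)] at h
      linear_combination h
    -- the eigenvector is nonzero at index 0
    have hv0ne : v ⟨0, hn⟩ ≠ 0 := by
      intro h0
      apply hv0
      funext i
      have hz : ∀ k (hk : k < n), v ⟨k, hk⟩ = 0 := by
        intro k
        induction k with
        | zero => intro hk; exact h0
        | succ k ih =>
          intro hk
          rw [hstep k hk, ih (by omega), h0]
          ring
      have := hz i.1 i.2
      simpa using this
    -- values of the eigenvector
    have haVal : ∀ k (hk : k < n), v ⟨k, hk⟩ = (aeval μ) (V n phat k) * v ⟨0, hn⟩ := by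
      intro k
      induction k with
      | zero =>
        intro hk
        rw [V_zero n phat hn, _root_.map_one, one_mul]
      | succ k ih =>
        intro hk
        rw [hstep k hk, ih (by omega), V_succ n phat k (by omega), _root_.map_add,
          _root_.map_mul, aeval_X, aeval_C, c, _root_.map_neg]
        ring
    -- last row
    have hlastsum : ∀ j : Fin n, (algebraMap ℝ ℂ) (M ⟨n - 1, by omega⟩ j) * v j
        = (if j = (⟨0, hn⟩ : Fin n) then (algebraMap ℝ ℂ) (c n phat (n - 1)) * v j else 0)
          + (algebraMap ℝ ℂ) (rr n phat (j : ℕ)) * v j := by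
      intro j
      rw [hMdef, M_entry]
      by_cases hj0 : (j : ℕ) = 0
      · have hj : j = ⟨0, hn⟩ := Fin.ext hj0
        subst hj
        rw [if_pos rfl, if_pos rfl]
        have : rr n phat 0 = 0 := by rw [rr, if_pos rfl]
        rw [this, map_zero, zero_mul, add_zero]
      · rw [if_neg hj0, if_neg (by simp [Fin.ext_iff]; omega), zero_add]
        have hcomp : companionMat phat ⟨n - 1, by omega⟩ j
            = rr n phat (j : ℕ) := by
          rw [companionMat]
          simp only [Matrix.of_apply]
          simp only [if_true]
          rw [rr, if_neg hj0, a, dif_pos (by omega)]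
        rw [hcomp]
    have hlast := hrow ⟨n - 1, by omega⟩
    rw [Finset.sum_congr rfl (fun j _ => hlastsum j), Finset.sum_add_distrib,
      Finset.sum_ite_eq' Finset.univ, if_pos (Finset.mem_univ _)] at hlast
    -- substitute eigenvector values
    have hsub : ∀ j : Fin n, (algebraMap ℝ ℂ) (rr n phat (j : ℕ)) * v j
        = ((algebraMap ℝ ℂ) (rr n phat (j : ℕ)) * (aeval μ) (V n phat (j : ℕ))) * v ⟨0, hn⟩ := by
      intro j
      have := haVal j.1 j.2
      rw [Fin.eta] at this
      rw [this, mul_assoc]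
    rw [Finset.sum_congr rfl (fun j _ => hsub j), ← Finset.sum_mul,
      haVal (n - 1) (by omega)] at hlast
    -- cancel v0
    have hres : (algebraMap ℝ ℂ) (c n phat (n - 1))
        + ∑ j : Fin n, (algebraMap ℝ ℂ) (rr n phat (j : ℕ)) * (aeval μ) (V n phat (j : ℕ))
        = μ * (aeval μ) (V n phat (n - 1)) := by
      apply mul_right_cancel₀ hv0ne
      rw [add_mul]
      linear_combination hlast
    -- turn the identity into (μ + 1)^n = 0
    have hVn : (aeval μ) (V n phat n)
        = μ * (aeval μ) (V n phat (n - 1)) + (algebraMap ℝ ℂ) ((Pp n phat).coeff 0) := by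
      have h := V_succ n phat (n - 1) (by omega)
      rw [show n - 1 + 1 = n by omega, show n - 1 - (n - 1) = 0 by omega] at h
      rw [h, _root_.map_add, _root_.map_mul, aeval_X, aeval_C]
    have hkey : (aeval μ) (Pp n phat) = (aeval μ) (T n)
        + ∑ j : Fin n, (algebraMap ℝ ℂ) (rr n phat (j : ℕ)) * (aeval μ) (V n phat (j : ℕ)) := by
      conv_lhs => rw [key_identity n phat]
      rw [_root_.map_add, map_sum]
      congr 1
      refine Finset.sum_congr rfl fun j _ => ?_
      rw [_root_.map_smul, Algebra.smul_def]
    have hT0 : (aeval μ) (T n) = 0 := by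
      have h1 : (algebraMap ℝ ℂ) (c n phat (n - 1))
          = -(algebraMap ℝ ℂ) ((Pp n phat).coeff 0) := by
        rw [c, show n - 1 - (n - 1) = 0 by omega, _root_.map_neg]
      have h3 : μ * (aeval μ) (V n phat (n - 1))
          = (aeval μ) (Pp n phat) - (algebraMap ℝ ℂ) ((Pp n phat).coeff 0) := by
        rw [← V_top n phat, hVn, V_top]; ring
      have h4 := hres
      rw [h1, h3, hkey] at h4
      linear_combination -h4
    have hpow : (μ + 1) ^ n = 0 := by
      have h := hT0
      rw [T, _root_.map_pow, _root_.map_add, aeval_X, _root_.map_one] at h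
      exact h
    have hμ1 : μ = -1 := by
      have h := (pow_eq_zero_iff (by omega : n ≠ 0)).1 hpow
      linear_combination h
    rw [hμ1]
    norm_num
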